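/- Let L ⊣ R be an adjunction between categories C and D, with R fully faithful and D Karoubian (idempotent complete). Write T = R L for the induced monad on C, with unit η and counit ε. Let M ∈ C and φ : T M ⟶ M satisfy φ ∘ η_M = 1_M. Then there exists an object M₀ ∈ D and an isomorphism ν : M ≅ R M₀ such that φ = ν⁻¹ ∘ R(ε_{M₀}) ∘ T(ν). -/
import Mathlib


open CategoryTheory

/-- If `L ⊣ R` with `R` fully faithful and `D` Karoubian (idempotent complete), then any
`φ : T M ⟶ M` (with `T = R L`) satisfying `φ ∘ η_M = 1_M` is, up to an isomorphism
`ν : M ≅ R M₀`, the free algebra structure map `R(ε_{M₀})`: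
`φ = ν⁻¹ ∘ R(ε_{M₀}) ∘ T(ν)`. -/
theorem splitting_of_unital_action
    {C D : Type*} [Category C] [Category D]
    (L : C ⥤ D) (R : D ⥤ C) (adj : L ⊣ R)
    [R.Full] [R.Faithful] [IsIdempotentComplete D]
    (M : C) (φ : R.obj (L.obj M) ⟶ M) (hφ : adj.unit.app M ≫ φ = 𝟙 M) :
    ∃ (M₀ : D) (ν : M ≅ R.obj M₀),
      φ = R.map (L.map ν.hom) ≫ R.map (adj.counit.app M₀) ≫ ν.inv := by
  -- Since R is fully faithful, the counit is an isomorphism, so both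
  -- `R.map (L.map (adj.unit.app M))` and `adj.unit.app (R.obj (L.obj M))` are
  -- inverses of `R.map (adj.counit.app (L.obj M))`, hence equal.
  have hinv : IsIso (R.map (adj.counit.app (L.obj M))) := inferInstance
  have h1 : L.map (adj.unit.app M) ≫ adj.counit.app (L.obj M) = 𝟙 _ :=
    adj.left_triangle_components M
  have h2 : adj.unit.app (R.obj (L.obj M)) ≫ R.map (adj.counit.app (L.obj M)) = 𝟙 _ :=
    adj.right_triangle_components (L.obj M)
  have h1' : R.map (L.map (adj.unit.app M)) ≫ R.map (adj.counit.app (L.obj M)) = 𝟙 _ := by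
    rw [← R.map_comp, h1, R.map_id]
  have heq : adj.unit.app (R.obj (L.obj M)) = R.map (L.map (adj.unit.app M)) := by
    rw [← cancel_mono (R.map (adj.counit.app (L.obj M))), h2, h1']; rfl
  have hφη : φ ≫ adj.unit.app M = 𝟙 _ := by
    have hnat := adj.unit.naturality φ
    simp only [Functor.id_map, Functor.comp_map] at hnat
    rw [hnat, heq, ← R.map_comp, ← L.map_comp, hφ]; simp
  refine ⟨L.obj M, ⟨adj.unit.app M, φ, hφ, hφη⟩, ?_⟩
  simp only [h1', ← Category.assoc]
  simp
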